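/- Let s⁰ ∈ ℤ^ℕ be exponentially bounded and let X_{s⁰}(𝓕) = {x ∈ J(𝓕) : |s_n(x)| ≥ |s⁰_n| for all n ≥ 0}, where s_n(x) denotes the n-th entry of the address of x. Then the set of endpoints of J(𝓕) contained in X_{s⁰}(𝓕), namely {(t_s, s) : s exponentially bounded with |s_n| ≥ |s⁰_n| for all n ≥ 0}, is dense in X_{s⁰}(𝓕). Moreover, if s⁰ is fast, then every such endpoint is an escaping endpoint of 𝓕. -/

import Mathlib

open Set Filter Topology OnePoint

noncomputable section

/-- The space of external addresses: integer sequences `s₀ s₁ s₂ …`. -/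
abbrev Addr : Type := ℕ → ℤ

/-- The one-sided shift on external addresses. -/
def shift (s : Addr) : Addr := fun n => s (n + 1)

/-- The model map `𝓕(t, s) = (F(t) − 2π|s₁|, σ(s))`, where `F(t) = eᵗ − 1`. -/
def Fmodel : ℝ × Addr → ℝ × Addr :=
  fun x => (Real.exp x.1 - 1 - 2 * Real.pi * |(x.2 1 : ℝ)|, shift x.2)

/-- The model Julia set `J(𝓕)`: points whose forward orbit stays in `[0,∞) × ℤ^ℕ`. -/
def JF : Set (ℝ × Addr) := {x | ∀ n : ℕ, 0 ≤ (Fmodel^[n] x).1}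

/-- The model escaping set `I(𝓕)`. -/
def IF : Set (ℝ × Addr) :=
  {x | x ∈ JF ∧ Tendsto (fun n => (Fmodel^[n] x).1) atTop atTop}

/-- An address `s` is exponentially bounded if `(t, s) ∈ J(𝓕)` for some `t`. -/
def ExpBounded (s : Addr) : Prop := ∃ t : ℝ, (t, s) ∈ JF

/-- The minimal potential `t_s = min {t ≥ 0 : (t, s) ∈ J(𝓕)}` of an address `s`. -/
def tmin (s : Addr) : ℝ := sInf {t | (t, s) ∈ JF}

/-- An exponentially bounded address `s` is fast if the endpoint `(t_s, s)` escapes. -/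
def Fast (s : Addr) : Prop := ExpBounded s ∧ (tmin s, s) ∈ IF

/-- The set `Ẽ(𝓕)` of escaping endpoints of the model: the points `(t_s, s)` for fast `s`. -/
def escEndF : Set (ℝ × Addr) := {x | ∃ s : Addr, Fast s ∧ x = (tmin s, s)}

/-- The inverse `F⁻¹(t) = log(1 + t)` of `F(t) = eᵗ − 1`. -/
def Finv (t : ℝ) : ℝ := Real.log (1 + t)

/-- The sub-fan `X_{s⁰}(𝓕) = {x ∈ J(𝓕) : |s_n(x)| ≥ |s⁰_n| for all n ≥ 0}`. -/
def Xsub (s0 : Addr) : Set (ℝ × Addr) := {x | x ∈ JF ∧ ∀ n : ℕ, |s0 n| ≤ |x.2 n|}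

/-- The endpoints of `J(𝓕)` contained in `X_{s⁰}(𝓕)`. -/
def endpointsIn (s0 : Addr) : Set (ℝ × Addr) :=
  {p | ∃ s : Addr, ExpBounded s ∧ (∀ n : ℕ, |s0 n| ≤ |s n|) ∧ p = (tmin s, s)}

/-! ### Auxiliary machinery -/

/-- The potential orbit of `(t,s)` under the model map. -/
def orb (s : Addr) (t : ℝ) : ℕ → ℝ
  | 0 => t
  | n+1 => Real.exp (orb s t n) - 1 - 2 * Real.pi * |(s (n+1) : ℝ)|

lemma iter_eq (s : Addr) (t : ℝ) : ∀ n, Fmodel^[n] (t, s) = (orb s t n, fun k => s (k + n))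
  | 0 => by simp [orb]
  | n+1 => by
    rw [Function.iterate_succ_apply', iter_eq s t n]
    simp only [Fmodel, shift, orb]
    refine Prod.ext ?_ ?_
    · simp only [Nat.add_comm 1 n]
    · funext k; exact congrArg s (by omega)

lemma mem_JF (s : Addr) (t : ℝ) : (t, s) ∈ JF ↔ ∀ n, 0 ≤ orb s t n := by
  simp only [JF, mem_setOf_eq, iter_eq]

lemma orb_compare {s s' : Addr} (h : ∀ k, |s' k| ≤ |s k|) {t t' : ℝ} (ht : t ≤ t') :
    ∀ n, orb s t n ≤ orb s' t' n
  | 0 => ht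
  | n+1 => by
    have h1 : (|(s' (n+1) : ℝ)|) ≤ |(s (n+1) : ℝ)| := by
      rw [← Int.cast_abs, ← Int.cast_abs]; exact_mod_cast h (n+1)
    have h2 := Real.exp_le_exp.2 (orb_compare h ht n)
    simp only [orb]
    nlinarith [Real.pi_pos]

lemma orb_mono {s : Addr} {t t' : ℝ} (ht : t ≤ t') (n : ℕ) : orb s t n ≤ orb s t' n :=
  orb_compare (fun _ => le_refl _) ht n

lemma orb_strict {s : Addr} {t t' : ℝ} (ht : t < t') : ∀ n, orb s t n < orb s t' n
  | 0 => ht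
  | n+1 => by
    have h2 := Real.exp_lt_exp.2 (orb_strict (s := s) ht n)
    simp only [orb]; linarith

lemma orb_local {s s' : Addr} (t : ℝ) :
    ∀ n, (∀ k, 1 ≤ k → k ≤ n → s k = s' k) → orb s t n = orb s' t n
  | 0, _ => rfl
  | n+1, h => by
    simp only [orb]
    rw [orb_local t n (fun k h1 h2 => h k h1 (by omega)), h (n+1) (by omega) le_rfl]

lemma orb_cont (s : Addr) : ∀ n, Continuous (fun t => orb s t n)
  | 0 => continuous_id
  | n+1 => by
    simp only [orb]
    exact ((Real.continuous_exp.comp (orb_cont s n)).sub continuous_const).sub continuous_const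

lemma orb_shift (s : Addr) (t : ℝ) (m : ℕ) :
    ∀ n, orb (fun k => s (k + m)) (orb s t m) n = orb s t (n + m)
  | 0 => by simp [orb]
  | n+1 => by
    simp only [orb, orb_shift s t m n]
    rw [show n + 1 + m = (n + m) + 1 from by omega]
    simp only [orb]

lemma JF_split (s : Addr) (t : ℝ) (m : ℕ) :
    (t, s) ∈ JF ↔ (∀ n ≤ m, 0 ≤ orb s t n) ∧ (orb s t m, fun k => s (k + m)) ∈ JF := by
  simp only [mem_JF]
  constructor
  · intro H
    refine ⟨fun n _ => H n, fun n => ?_⟩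
    rw [orb_shift]; exact H (n + m)
  · rintro ⟨H1, H2⟩ n
    rcases le_or_gt n m with hn | hn
    · exact H1 n hn
    · have := H2 (n - m)
      rwa [orb_shift, Nat.sub_add_cancel hn.le] at this

lemma tmin_isLeast {s : Addr} (hs : ExpBounded s) : IsLeast {t | (t, s) ∈ JF} (tmin s) := by
  have hne : {t | (t, s) ∈ JF}.Nonempty := hs
  have hbdd : BddBelow {t | (t, s) ∈ JF} := by
    refine ⟨0, fun t ht => ?_⟩
    exact (mem_JF s t).1 ht 0
  have hcl : IsClosed {t | (t, s) ∈ JF} := by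
    have : {t | (t, s) ∈ JF} = ⋂ n, {t | 0 ≤ orb s t n} := by
      ext t; simp [mem_JF]
    rw [this]
    exact isClosed_iInter fun n => isClosed_le continuous_const (orb_cont s n)
  exact ⟨hcl.csInf_mem hne hbdd, fun t ht => csInf_le hbdd ht⟩

lemma tmin_mem {s : Addr} (hs : ExpBounded s) : (tmin s, s) ∈ JF := (tmin_isLeast hs).1

lemma tmin_nonneg {s : Addr} (hs : ExpBounded s) : 0 ≤ tmin s :=
  (mem_JF _ _).1 (tmin_mem hs) 0

lemma mem_JF_iff {s : Addr} (hs : ExpBounded s) (t : ℝ) : (t, s) ∈ JF ↔ tmin s ≤ t := by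
  constructor
  · exact fun ht => (tmin_isLeast hs).2 ht
  · intro ht
    rw [mem_JF]
    exact fun n => le_trans ((mem_JF _ _).1 (tmin_mem hs) n) (orb_mono ht n)

lemma tmin_compare {s0 s : Addr} (hs : ExpBounded s) (hd : ∀ k, |s0 k| ≤ |s k|) :
    ExpBounded s0 ∧ tmin s0 ≤ tmin s := by
  have h0 : (tmin s, s0) ∈ JF := by
    rw [mem_JF]
    intro n
    exact le_trans ((mem_JF s _).1 (tmin_mem hs) n) (orb_compare hd le_rfl n)
  have he : ExpBounded s0 := ⟨tmin s, h0⟩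
  exact ⟨he, (tmin_isLeast he).2 h0⟩
lemma endpoint_step {s : Addr} (hs : ExpBounded s) :
    ExpBounded (shift s) ∧ orb s (tmin s) 1 = tmin (shift s) := by
  have hsplit := (JF_split s (tmin s) 1).1 (tmin_mem hs)
  have htail : (orb s (tmin s) 1, shift s) ∈ JF := hsplit.2
  have he : ExpBounded (shift s) := ⟨_, htail⟩
  have hu : tmin (shift s) ≤ orb s (tmin s) 1 := (mem_JF_iff he _).1 htail
  refine ⟨he, le_antisymm ?_ hu⟩
  by_contra hcon
  push_neg at hcon
  set τ := tmin (shift s) with hτ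
  have hτ0 : 0 ≤ τ := tmin_nonneg he
  set c : ℝ := 2 * Real.pi * |(s 1 : ℝ)| with hc
  have hc0 : 0 ≤ c := by positivity
  have hpos : (0:ℝ) < 1 + (c + τ) := by linarith
  set t'' : ℝ := Real.log (1 + (c + τ)) with ht''
  have horb1 : orb s t'' 1 = τ := by
    simp only [orb, ht'', Real.exp_log hpos, ← hc]
    ring
  have hmem : (t'', s) ∈ JF := by
    rw [JF_split s t'' 1]
    constructor
    · intro n hn
      interval_cases n
      · exact Real.log_nonneg (by linarith)
      · rw [horb1]; exact hτ0
    · rw [horb1]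
      exact tmin_mem he
  have h1 : tmin s ≤ t'' := (tmin_isLeast hs).2 hmem
  have h2 : orb s (tmin s) 1 ≤ orb s t'' 1 := orb_mono h1 1
  rw [horb1] at h2
  exact absurd h2 (not_le.2 hcon)

lemma endpoint_iter {s : Addr} (hs : ExpBounded s) :
    ∀ n, ExpBounded (fun k => s (k + n)) ∧ orb s (tmin s) n = tmin (fun k => s (k + n))
  | 0 => ⟨hs, rfl⟩
  | n+1 => by
    obtain ⟨he, heq⟩ := endpoint_iter hs n
    obtain ⟨he', heq'⟩ := endpoint_step he
    have hsh : shift (fun k => s (k + n)) = fun k => s (k + (n + 1)) := by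
      funext k; simp only [shift]; congr 1; omega
    rw [hsh] at he' heq'
    refine ⟨he', ?_⟩
    rw [← heq', ← heq]
    simp only [orb]
    rw [show 1 + n = n + 1 from by omega]

lemma Finv_nonneg {x : ℝ} (hx : 0 ≤ x) : 0 ≤ Finv x := Real.log_nonneg (by linarith)

lemma Finv_le {x : ℝ} (hx : 0 ≤ x) : Finv x ≤ x := by
  rw [Finv, Real.log_le_iff_le_exp (by linarith)]
  linarith [Real.add_one_le_exp x]

lemma Finv_mono {x y : ℝ} (hx : -1 < x) (hxy : x ≤ y) : Finv x ≤ Finv y :=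
  Real.log_le_log (by linarith) (by linarith)

lemma Finv_iter_nonneg : ∀ (j : ℕ) {x : ℝ}, 0 ≤ x → 0 ≤ Finv^[j] x
  | 0, x, hx => hx
  | j+1, x, hx => by
    rw [Function.iterate_succ_apply]
    exact Finv_iter_nonneg j (Finv_nonneg hx)

lemma Finv_iter_mono : ∀ (j : ℕ) {x y : ℝ}, 0 ≤ x → x ≤ y → Finv^[j] x ≤ Finv^[j] y
  | 0, x, y, _, hxy => hxy
  | j+1, x, y, hx, hxy => by
    rw [Function.iterate_succ_apply, Function.iterate_succ_apply]
    exact Finv_iter_mono j (Finv_nonneg hx) (Finv_mono (by linarith) hxy)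

lemma tendsto_Finv_iter {C : ℝ} (hC : 0 ≤ C) :
    Tendsto (fun m => Finv^[m] C) atTop (𝓝 0) := by
  set b : ℕ → ℝ := fun m => Finv^[m] C with hb
  have hb0 : ∀ m, 0 ≤ b m := fun m => Finv_iter_nonneg m hC
  have hanti : Antitone b := by
    refine antitone_nat_of_succ_le fun m => ?_
    have : b (m+1) = Finv^[m] (Finv C) := Function.iterate_succ_apply Finv m C
    rw [this]
    exact Finv_iter_mono m (Finv_nonneg hC) (Finv_le hC)
  have hbdd : BddBelow (range b) := ⟨0, by rintro x ⟨m, rfl⟩; exact hb0 m⟩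
  have hlim : Tendsto b atTop (𝓝 (⨅ m, b m)) := tendsto_atTop_ciInf hanti hbdd
  set L := ⨅ m, b m with hL
  have hL0 : 0 ≤ L := le_ciInf hb0
  have hfix : Finv L = L := by
    have h1 : Tendsto (fun m => b (m+1)) atTop (𝓝 L) :=
      (tendsto_add_atTop_iff_nat 1).2 hlim
    have h2 : Tendsto (fun m => Finv (b m)) atTop (𝓝 (Finv L)) := by
      have hcont : ContinuousAt Finv L := by
        have : ContinuousAt (fun x => Real.log (1 + x)) L :=
          (Real.continuousAt_log (by linarith)).comp (by fun_prop)
        exact this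
      exact hcont.tendsto.comp hlim
    have h3 : (fun m => b (m+1)) = fun m => Finv (b m) := by
      funext m; exact Function.iterate_succ_apply' Finv m C
    rw [h3] at h1
    exact tendsto_nhds_unique h2 h1
  have hLz : L = 0 := by
    by_contra hne
    have hLpos : 0 < L := lt_of_le_of_ne hL0 (Ne.symm hne)
    have := Real.add_one_lt_exp (ne_of_gt hLpos)
    have hlt : Finv L < L := by
      rw [Finv]
      calc Real.log (1 + L) < Real.log (Real.exp L) :=
            Real.log_lt_log (by linarith) (by linarith)
        _ = L := Real.log_exp L
    rw [hfix] at hlt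
    exact lt_irrefl _ hlt
  rwa [hLz] at hlim

lemma orb_lower (s : Addr) (t : ℝ) :
    ∀ n, t - (∑ k ∈ Finset.range n, 2 * Real.pi * |(s (k+1) : ℝ)|) ≤ orb s t n
  | 0 => by simp [orb]
  | n+1 => by
    have ih := orb_lower s t n
    have hexp := Real.add_one_le_exp (orb s t n)
    simp only [orb, Finset.sum_range_succ]
    linarith
lemma log_add_le {A c : ℝ} (hA : 1 ≤ A) (hc : 0 ≤ c) : Real.log (A + c) ≤ Real.log A + c := by
  have hApos : (0:ℝ) < A := by linarith
  have h3 : Real.log ((A + c)/A) ≤ (A + c)/A - 1 := Real.log_le_sub_one_of_pos (by positivity)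
  have h2 : Real.log ((A + c)/A) = Real.log (A + c) - Real.log A :=
    Real.log_div (by positivity) (by positivity)
  have h5 : (A + c)/A - 1 = c/A := by field_simp; ring
  have h6 : c/A ≤ c := div_le_self hc hA
  linarith

set_option maxHeartbeats 1000000 in
lemma approx {s0 s : Addr} {t : ℝ} (hx : (t, s) ∈ JF) (hd : ∀ n, |s0 n| ≤ |s n|) (m : ℕ) :
    ∃ s' : Addr, ExpBounded s' ∧ (∀ n, |s0 n| ≤ |s' n|) ∧ (∀ n ≤ m, s' n = s n) ∧
      t ≤ tmin s' ∧ tmin s' ≤ t + Finv^[m] (2 * Real.pi) := by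
  have hπ := Real.pi_pos
  set tail : Addr := fun k => s (k + (m+1)) with htaildef
  have htail : (orb s t (m+1), tail) ∈ JF := ((JF_split s t (m+1)).1 hx).2
  have he_tail : ExpBounded tail := ⟨_, htail⟩
  set τ := tmin tail with hτdef
  have hτ0 : 0 ≤ τ := tmin_nonneg he_tail
  have hg0 : 0 ≤ orb s t m := (mem_JF s t).1 hx m
  have ht0 : 0 ≤ t := (mem_JF s t).1 hx 0
  set b : ℕ := (s (m+1)).natAbs with hbdef
  have hbcast : ((b : ℕ) : ℝ) = |(s (m+1) : ℝ)| := by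
    rw [hbdef, Nat.cast_natAbs, Int.cast_abs]
  have hτle : τ ≤ orb s t (m+1) := (mem_JF_iff he_tail _).1 htail
  have horbsucc : orb s t (m+1) = Real.exp (orb s t m) - 1 - 2*Real.pi*|(s (m+1) : ℝ)| := rfl
  have hkey : Real.log (1 + (2 * Real.pi * b + τ)) ≤ orb s t m := by
    rw [Real.log_le_iff_le_exp (by positivity)]
    rw [horbsucc, ← hbcast] at hτle
    linarith
  obtain ⟨K1, hK1⟩ := exists_nat_ge (Real.exp (orb s t m))
  have hex : ∃ K : ℕ, orb s t m < Real.log (1 + (2*Real.pi*((b:ℝ)+1+K) + τ)) := by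
    refine ⟨K1, ?_⟩
    have h2π : (1:ℝ) ≤ 2*Real.pi := by linarith [Real.pi_gt_three]
    have hb0 : (0:ℝ) ≤ (b:ℝ) := Nat.cast_nonneg b
    have hKK : (0:ℝ) ≤ (K1:ℝ) := Nat.cast_nonneg K1
    have h1 : (K1:ℝ) ≤ 2*Real.pi*((b:ℝ)+1+K1) := by nlinarith
    have h2 : Real.exp (orb s t m) < 1 + (2*Real.pi*((b:ℝ)+1+K1) + τ) := by linarith
    calc orb s t m = Real.log (Real.exp (orb s t m)) := (Real.log_exp _).symm
      _ < _ := Real.log_lt_log (Real.exp_pos _) h2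
  set K0 := Nat.find hex with hK0def
  have hPK0 : orb s t m < Real.log (1 + (2*Real.pi*((b:ℝ)+1+K0) + τ)) := Nat.find_spec hex
  set M : ℕ := b + 1 + K0 with hMdef
  have hMcast : ((M:ℕ) : ℝ) = (b:ℝ)+1+K0 := by rw [hMdef]; push_cast; ring
  have hM1r : (1:ℝ) ≤ (M:ℝ) := by
    rw [hMcast]; have := Nat.cast_nonneg (α := ℝ) b; have := Nat.cast_nonneg (α := ℝ) K0; linarith
  set hstar := Real.log (1 + (2*Real.pi*(M:ℝ) + τ)) with hstardef
  have hgh : orb s t m < hstar := by rw [hstardef, hMcast]; exact hPK0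
  have hlow : Real.log (1 + (2*Real.pi*((M:ℝ)-1) + τ)) ≤ orb s t m := by
    rcases Nat.eq_zero_or_pos K0 with h0 | hpos
    · have hMb : (M:ℝ) - 1 = (b:ℝ) := by rw [hMcast, h0]; push_cast; ring
      rw [hMb]; exact hkey
    · have hmin := Nat.find_min hex (m := K0 - 1) (by omega)
      push_neg at hmin
      have hcast2 : (M:ℝ) - 1 = (b:ℝ)+1+((K0-1 : ℕ):ℝ) := by
        rw [hMcast, Nat.cast_sub hpos]; push_cast; ring
      rw [hcast2]; exact hmin
  have hstar0 : 0 ≤ hstar := Real.log_nonneg (by nlinarith)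
  set B := ∑ k ∈ Finset.range m, 2*Real.pi*|(s (k+1) : ℝ)| with hBdef
  have hB0 : 0 ≤ B := Finset.sum_nonneg fun k _ => by positivity
  set T := t + hstar + B with hTdef
  have htT : t ≤ T := by rw [hTdef]; linarith
  have hfT : hstar ≤ orb s T m := le_trans (by rw [hTdef]; linarith) (orb_lower s T m)
  obtain ⟨t', ht'mem, ht'eqraw⟩ :=
    intermediate_value_Ioc htT ((orb_cont s m).continuousOn) ⟨hgh, hfT⟩
  have ht'eq : orb s t' m = hstar := ht'eqraw
  have htt' : t < t' := ht'mem.1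
  set s' : Addr := fun n => if n = m+1 then ((M:ℕ) : ℤ) else s n with hs'def
  have hagree : ∀ n ≤ m, s' n = s n := fun n hn => if_neg (by omega)
  have hsM : s' (m+1) = ((M:ℕ) : ℤ) := if_pos rfl
  have hbM : |s (m+1)| < ((M:ℕ) : ℤ) := by
    rw [Int.abs_eq_natAbs, ← hbdef]
    exact_mod_cast (by omega : b < M)
  have hd' : ∀ n, |s0 n| ≤ |s' n| := by
    intro n
    by_cases hn : n = m+1
    · subst hn
      rw [hsM, abs_of_nonneg (Int.ofNat_nonneg M)]
      exact le_trans (hd _) hbM.le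
    · rw [hs'def]; simp only [if_neg hn]; exact hd n
  have horb_eq : ∀ (u : ℝ), ∀ n ≤ m, orb s' u n = orb s u n := by
    intro u n hn
    exact (orb_local u n (fun k h1 h2 => (if_neg (by omega : ¬ k = m+1)).symm)).symm
  have hMabs : |(((M:ℕ):ℤ) : ℝ)| = ((M:ℕ):ℝ) := by
    push_cast
    exact abs_of_nonneg (Nat.cast_nonneg M)
  have horb_succ : ∀ u : ℝ, orb s' u (m+1) = Real.exp (orb s u m) - 1 - 2*Real.pi*((M:ℕ):ℝ) := by
    intro u
    show Real.exp (orb s' u m) - 1 - 2*Real.pi*|((s' (m+1) : ℤ) : ℝ)| = _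
    rw [horb_eq u m le_rfl, hsM, hMabs]
  have htail_orb : ∀ (v : ℝ) (n : ℕ), orb (fun k => s' (k + (m+1))) v n = orb tail v n := by
    intro v n
    apply orb_local
    intro k hk _
    show s' (k + (m+1)) = s (k + (m+1))
    rw [hs'def]; exact if_neg (by omega)
  have hargpos : (0:ℝ) < 1 + (2*Real.pi*(M:ℝ) + τ) := by nlinarith
  have hchar : ∀ u : ℝ, ((u, s') ∈ JF) ↔ ((∀ n ≤ m, 0 ≤ orb s u n) ∧ hstar ≤ orb s u m) := by
    intro u
    rw [JF_split s' u (m+1)]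
    constructor
    · rintro ⟨H1, H2⟩
      refine ⟨fun n hn => by rw [← horb_eq u n hn]; exact H1 n (by omega), ?_⟩
      have hJF2 : (orb s' u (m+1), tail) ∈ JF := by
        rw [mem_JF]
        intro n
        rw [← htail_orb]
        exact (mem_JF _ _).1 H2 n
      have hτu : τ ≤ orb s' u (m+1) := (mem_JF_iff he_tail _).1 hJF2
      rw [horb_succ u] at hτu
      rw [hstardef, Real.log_le_iff_le_exp hargpos]
      linarith
    · rintro ⟨H1, H2⟩
      have hexp : 1 + (2*Real.pi*(M:ℝ) + τ) ≤ Real.exp (orb s u m) := by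
        rw [hstardef, Real.log_le_iff_le_exp hargpos] at H2; exact H2
      have hτu : τ ≤ orb s' u (m+1) := by rw [horb_succ u]; linarith
      constructor
      · intro n hn
        rcases Nat.lt_or_ge n (m+1) with hlt | hge
        · rw [horb_eq u n (by omega)]; exact H1 n (by omega)
        · have hn1 : n = m+1 := by omega
          subst hn1
          exact le_trans hτ0 hτu
      · rw [mem_JF]
        intro n
        rw [htail_orb]
        exact (mem_JF _ _).1 ((mem_JF_iff he_tail _).2 hτu) n
  have ht'J : (t', s') ∈ JF := by
    rw [hchar t']
    refine ⟨fun n hn => le_trans ((mem_JF s t).1 hx n) (orb_mono htt'.le n), le_of_eq ht'eq.symm⟩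
  have hleast : IsLeast {u | (u, s') ∈ JF} t' := by
    refine ⟨ht'J, fun u hu => ?_⟩
    by_contra hc
    push_neg at hc
    have h1 : orb s u m < orb s t' m := orb_strict hc m
    have h2 := ((hchar u).1 hu).2
    rw [ht'eq] at h1
    linarith
  have htm : tmin s' = t' := hleast.csInf_eq
  have he' : ExpBounded s' := ⟨t', ht'J⟩
  have hgap : ∀ j ≤ m, orb s t' (m - j) - orb s t (m - j) ≤ Finv^[j] (2*Real.pi) := by
    intro j
    induction j with
    | zero =>
      intro _
      simp only [Nat.sub_zero, Function.iterate_zero, id_eq]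
      set A := 1 + (2*Real.pi*((M:ℝ)-1) + τ) with hAdef
      have hA1 : (1:ℝ) ≤ A := by rw [hAdef]; nlinarith
      have hApos : (0:ℝ) < A := by linarith
      have harg : 1 + (2*Real.pi*(M:ℝ) + τ) = A + 2*Real.pi := by rw [hAdef]; ring
      have hlog : hstar ≤ Real.log A + 2*Real.pi := by
        rw [hstardef, harg]
        exact log_add_le hA1 (by linarith)
      rw [ht'eq]
      linarith
    | succ j ih =>
      intro hj
      have ihj := ih (by omega)
      have hk1 : m - j = (m - (j+1)) + 1 := by omega
      rw [hk1] at ihj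
      set k := m - (j+1) with hkdef
      have hΔ0 : 0 ≤ orb s t' k - orb s t k := sub_nonneg.2 (orb_mono htt'.le k)
      have ha0 : 0 ≤ orb s t k := (mem_JF s t).1 hx k
      have hdiff : orb s t' (k+1) - orb s t (k+1)
          = Real.exp (orb s t' k) - Real.exp (orb s t k) := by
        simp only [orb]; ring
      have hexpand : Real.exp (orb s t' k)
          = Real.exp (orb s t k) * Real.exp (orb s t' k - orb s t k) := by
        rw [← Real.exp_add]; ring_nf
      have h1 : (1:ℝ) ≤ Real.exp (orb s t k) := Real.one_le_exp ha0
      have h2 : (1:ℝ) ≤ Real.exp (orb s t' k - orb s t k) := Real.one_le_exp hΔ0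
      have hge : Real.exp (orb s t' k - orb s t k) - 1 ≤ orb s t' (k+1) - orb s t (k+1) := by
        rw [hdiff, hexpand]
        have key : Real.exp (orb s t k) * Real.exp (orb s t' k - orb s t k) - Real.exp (orb s t k)
            = Real.exp (orb s t k) * (Real.exp (orb s t' k - orb s t k) - 1) := by ring
        have key2 : Real.exp (orb s t' k - orb s t k) - 1
            ≤ Real.exp (orb s t k) * (Real.exp (orb s t' k - orb s t k) - 1) :=
          le_mul_of_one_le_left (by linarith) h1
        linarith
      have hΔ'0 : 0 ≤ orb s t' (k+1) - orb s t (k+1) := sub_nonneg.2 (orb_mono htt'.le (k+1))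
      have hstep : orb s t' k - orb s t k ≤ Finv (orb s t' (k+1) - orb s t (k+1)) := by
        rw [Finv, Real.le_log_iff_exp_le (by linarith)]
        linarith
      have hmono2 : Finv (orb s t' (k+1) - orb s t (k+1)) ≤ Finv (Finv^[j] (2*Real.pi)) :=
        Finv_mono (by linarith) ihj
      rw [Function.iterate_succ_apply']
      linarith
  refine ⟨s', he', hd', hagree, ?_, ?_⟩
  · rw [htm]; exact htt'.le
  · rw [htm]
    have hfinal := hgap m le_rfl
    simp only [Nat.sub_self] at hfinal
    have h0 : orb s t' 0 = t' := rfl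
    have h0' : orb s t 0 = t := rfl
    rw [h0, h0'] at hfinal
    linarith
theorem endpoints_dense_in_subfan_aux (s0 : Addr) (h : ExpBounded s0) :
    endpointsIn s0 ⊆ Xsub s0 ∧ Xsub s0 ⊆ closure (endpointsIn s0) ∧
    (Fast s0 → endpointsIn s0 ⊆ escEndF) := by
  refine ⟨?_, ?_, ?_⟩
  · rintro p ⟨s, hs, hd, rfl⟩
    exact ⟨tmin_mem hs, hd⟩
  · rintro ⟨t, s⟩ ⟨hJ, hd⟩
    have hd' : ∀ n, |s0 n| ≤ |s n| := hd
    have H : ∀ m : ℕ, ∃ s' : Addr, ExpBounded s' ∧ (∀ n, |s0 n| ≤ |s' n|) ∧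
        (∀ n ≤ m, s' n = s n) ∧ t ≤ tmin s' ∧ tmin s' ≤ t + Finv^[m] (2*Real.pi) :=
      fun m => approx hJ hd' m
    choose S hE hD hA hLB hUB using H
    have hb : Tendsto (fun m => Finv^[m] (2*Real.pi)) atTop (𝓝 0) :=
      tendsto_Finv_iter (by positivity)
    have h1 : Tendsto (fun m => tmin (S m)) atTop (𝓝 t) := by
      have hup : Tendsto (fun m => t + Finv^[m] (2*Real.pi)) atTop (𝓝 (t + 0)) :=
        tendsto_const_nhds.add hb
      rw [add_zero] at hup
      exact tendsto_of_tendsto_of_tendsto_of_le_of_le tendsto_const_nhds hup hLB hUB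
    have h2 : Tendsto (fun m => S m) atTop (𝓝 s) := by
      rw [tendsto_pi_nhds]
      intro k
      apply Tendsto.congr' _ tendsto_const_nhds
      filter_upwards [eventually_ge_atTop k] with m hm
      exact (hA m k hm).symm
    have h3 : Tendsto (fun m => ((tmin (S m), S m) : ℝ × Addr)) atTop (𝓝 (t, s)) :=
      h1.prodMk_nhds h2
    exact mem_closure_of_tendsto h3 (Eventually.of_forall fun m => ⟨S m, hE m, hD m, rfl⟩)
  · rintro hf p ⟨s, hs, hd, rfl⟩
    refine ⟨s, ⟨hs, tmin_mem hs, ?_⟩, rfl⟩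
    have h0 : ExpBounded s0 := hf.1
    have hten : Tendsto (fun n => (Fmodel^[n] (tmin s0, s0)).1) atTop atTop := hf.2.2
    refine tendsto_atTop_mono (fun n => ?_) hten
    show (Fmodel^[n] (tmin s0, s0)).1 ≤ (Fmodel^[n] (tmin s, s)).1
    rw [iter_eq, iter_eq]
    show orb s0 (tmin s0) n ≤ orb s (tmin s) n
    have e0 := endpoint_iter h0 n
    have es := endpoint_iter hs n
    rw [e0.2, es.2]
    exact (tmin_compare es.1 (fun k => hd (k+n))).2

/-- **Endpoints are dense in sub-fans.** For exponentially bounded `s⁰`, the set of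
endpoints of `J(𝓕)` contained in `X_{s⁰}(𝓕)` is dense in `X_{s⁰}(𝓕)`; moreover, if `s⁰`
is fast, every such endpoint is an escaping endpoint of `𝓕`. -/
theorem endpoints_dense_in_subfan (s0 : Addr) (h : ExpBounded s0) :
    endpointsIn s0 ⊆ Xsub s0 ∧ Xsub s0 ⊆ closure (endpointsIn s0) ∧
    (Fast s0 → endpointsIn s0 ⊆ escEndF) := by
  exact endpoints_dense_in_subfan_aux s0 h

end
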